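/- In a finitely complete category with an exponentiable map p : E ⟶ B, pushing forward the first leg of the generic composite GenComp(p', p) along its second leg (i.e., along π^*π_*(E × B') ⟶ π_*(E × B')) yields the same morphism p_*(E × E') ⟶ p_*(E × B') as applying the polynomial functor P_p (the composite of E × −, pushforward p_*, and forgetting to C) to the map E' ⟶ B'. (This is an instance of the distributivity/Beck–Chevalley law for pushforwards.) -/

import Mathlib

open CategoryTheory CategoryTheory.Limits

noncomputable section

variable {C : Type*} [Category C] [HasFiniteLimits C]

/-- The pushforward `p_*(E × B')` of the product projection, as an object of `C/B`. -/
def genQ {E B : C} (p : E ⟶ B) [(Over.pullback p).IsLeftAdjoint] (B' : C) : Over B :=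
  (Over.pullback p).rightAdjoint.obj (Over.mk (prod.fst : E ⨯ B' ⟶ E))

/-- The counit `ev : p^*p_*(E × B') ⟶ E × B'` of the pullback–pushforward adjunction. -/
def genCounit {E B : C} (p : E ⟶ B) [(Over.pullback p).IsLeftAdjoint] (B' : C) :
    (Over.pullback p).obj (genQ p B') ⟶ Over.mk (prod.fst : E ⨯ B' ⟶ E) :=
  (Adjunction.ofIsLeftAdjoint (Over.pullback p)).counit.app _

/-- The composite `p^*p_*(E × B') ⟶ E × B' ⟶ B'`. -/
def evBase {E B : C} (p : E ⟶ B) [(Over.pullback p).IsLeftAdjoint] (B' : C) :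
    pullback (genQ p B').hom p ⟶ B' :=
  (genCounit p B').left ≫ (prod.snd : E ⨯ B' ⟶ B')

namespace PGCAux

variable {E B E' B' : C} (p : E ⟶ B) [(Over.pullback p).IsLeftAdjoint] (p' : E' ⟶ B')

/-- the pullback–pushforward adjunction -/
def adj : Over.pullback p ⊣ (Over.pullback p).rightAdjoint :=
  Adjunction.ofIsLeftAdjoint (Over.pullback p)

def Ep (p' : E' ⟶ B') : (Over.mk (prod.fst : E ⨯ E' ⟶ E)) ⟶ Over.mk (prod.fst : E ⨯ B' ⟶ E) :=
  Over.homMk (prod.map (𝟙 E) p') (by simp)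

abbrev fstP (B' : C) : pullback (genQ p B').hom p ⟶ (genQ p B').left :=
  pullback.fst _ _

def Xo (p' : E' ⟶ B') : Over (pullback (genQ p B').hom p) := Over.mk (pullback.snd p' (evBase p B'))

def Yo (p' : E' ⟶ B') : Over ((genQ p B').left) :=
  Over.mk (((Over.pullback p).rightAdjoint.map (Ep p')).left)

variable (A : Over ((genQ p B').left))

def Ahat : Over B := Over.mk (A.hom ≫ (genQ p B').hom)

def aA : Ahat p A ⟶ genQ p B' := Over.homMk A.hom rfl

def kap : pullback A.hom (fstP p B') ≅ pullback (A.hom ≫ (genQ p B').hom) p :=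
  pullbackRightPullbackFstIso (genQ p B').hom p A.hom

lemma ev_fst : (genCounit p B').left ≫ prod.fst = pullback.snd (genQ p B').hom p :=
  Over.w (genCounit p B')

lemma kapinv_snd :
    (kap p A).inv ≫ pullback.snd A.hom (fstP p B') = ((Over.pullback p).map (aA p A)).left := by
  apply pullback.hom_ext
  · simp only [kap, Over.pullback_map_left, Category.assoc, pullbackRightPullbackFstIso_inv_snd_fst]
    exact (pullback.lift_fst _ _ _).symm
  · simp only [kap, Over.pullback_map_left, Category.assoc, pullbackRightPullbackFstIso_inv_snd_snd]
    exact (pullback.lift_snd _ _ _).symm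

variable (G : Over (pullback (genQ p B').hom p) ⥤ Over ((genQ p B').left))
  (adjG : Over.pullback (fstP p B') ⊣ G)

variable {p' : E' ⟶ B'} {A}

def toE (g : A ⟶ G.obj (Xo p p')) : pullback A.hom (fstP p B') ⟶ E' :=
  ((adjG.homEquiv _ _).symm g).left ≫ pullback.fst p' (evBase p B')

lemma toE_comp (g : A ⟶ G.obj (Xo p p')) :
    toE p G adjG g ≫ p' = pullback.snd A.hom (fstP p B') ≫ evBase p B' := by
  have h := Over.w ((adjG.homEquiv _ _).symm g)
  simp only [Xo, Over.mk_hom, Over.pullback_obj_hom] at h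
  simp only [toE, Xo, Category.assoc, pullback.condition (f := p') (g := evBase p B')]
  rw [← Category.assoc, h]

def wMap (g : A ⟶ G.obj (Xo p p')) :
    (Over.pullback p).obj (Ahat p A) ⟶ Over.mk (prod.fst : E ⨯ E' ⟶ E) :=
  Over.homMk (prod.lift (pullback.snd (A.hom ≫ (genQ p B').hom) p)
    ((kap p A).inv ≫ toE p G adjG g)) (by exact prod.lift_fst _ _)

def vMap (g : A ⟶ G.obj (Xo p p')) :
    Ahat p A ⟶ (Over.pullback p).rightAdjoint.obj (Over.mk (prod.fst : E ⨯ E' ⟶ E)) :=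
  (adj p).homEquiv _ _ (wMap p G adjG g)

lemma wMap_Ep (g : A ⟶ G.obj (Xo p p')) :
    wMap p G adjG g ≫ Ep p' =
      (Over.pullback p).map (aA p A) ≫ (adj p).counit.app (Over.mk (prod.fst : E ⨯ B' ⟶ E)) := by
  have hc : ((adj p).counit.app (Over.mk (prod.fst : E ⨯ B' ⟶ E))) = genCounit p B' := rfl
  ext
  apply Limits.prod.hom_ext
  · simp [wMap, Ep, hc, ev_fst, aA, Ahat]
    exact (prod.lift_fst _ _).trans (pullback.lift_snd _ _ _).symm
  · simp only [Over.comp_left, wMap, Ep, Over.homMk_left, Category.assoc, prod.lift_map,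
      prod.lift_snd, Category.comp_id, hc]
    refine Eq.trans (?_ : _ = (kap p A).inv ≫ pullback.snd A.hom (fstP p B') ≫ evBase p B') ?_
    · change prod.lift (pullback.snd (A.hom ≫ (genQ p B').hom) p) ((kap p A).inv ≫ toE p G adjG g) ≫
        prod.map (𝟙 E) p' ≫ prod.snd = _
      simp [toE_comp]
      exact (prod.lift_snd_assoc _ _ _).trans (by rw [Category.assoc, toE_comp])
    · exact (Category.assoc _ _ _).symm.trans (kapinv_snd p A =≫ evBase p B')

lemma vMap_w (g : A ⟶ G.obj (Xo p p')) :
    vMap p G adjG g ≫ (Over.pullback p).rightAdjoint.map (Ep p') = aA p A := by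
  rw [vMap, ← Adjunction.homEquiv_naturality_right, wMap_Ep]
  exact (((adj p).homEquiv _ _).apply_eq_iff_eq_symm_apply).2
    ((adj p).homEquiv_counit _ _ _).symm

def fwd (g : A ⟶ G.obj (Xo p p')) : A ⟶ Yo p p' :=
  Over.homMk (vMap p G adjG g).left
    (congrArg CategoryTheory.CommaMorphism.left (vMap_w p G adjG g))

def vB (s : A ⟶ Yo p p') :
    Ahat p A ⟶ (Over.pullback p).rightAdjoint.obj (Over.mk (prod.fst : E ⨯ E' ⟶ E)) :=
  Over.homMk s.left (by
    have hw := Over.w s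
    simp only [Yo, Over.mk_hom] at hw
    have hm := Over.w ((Over.pullback p).rightAdjoint.map (Ep p'))
    rw [← hm]
    exact (Category.assoc _ _ _).symm.trans ((hw =≫ _).trans rfl))

lemma vB_w (s : A ⟶ Yo p p') :
    vB p s ≫ (Over.pullback p).rightAdjoint.map (Ep p') = aA p A := by
  ext
  have hw := Over.w s
  simp only [Yo, Over.mk_hom] at hw
  exact hw

def wB (s : A ⟶ Yo p p') : (Over.pullback p).obj (Ahat p A) ⟶ Over.mk (prod.fst : E ⨯ E' ⟶ E) :=
  ((adj p).homEquiv _ _).symm (vB p s)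

lemma wB_Ep (s : A ⟶ Yo p p') :
    wB p s ≫ Ep p' =
      (Over.pullback p).map (aA p A) ≫ (adj p).counit.app (Over.mk (prod.fst : E ⨯ B' ⟶ E)) := by
  rw [wB, ← Adjunction.homEquiv_naturality_right_symm, vB_w]
  exact (adj p).homEquiv_counit _ _ _

def uB (s : A ⟶ Yo p p') : pullback A.hom (fstP p B') ⟶ E' :=
  (kap p A).hom ≫ (wB p s).left ≫ prod.snd

lemma uB_comp (s : A ⟶ Yo p p') :
    uB p s ≫ p' = pullback.snd A.hom (fstP p B') ≫ evBase p B' := by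
  have h := congrArg CategoryTheory.CommaMorphism.left (wB_Ep p s)
  simp only [Over.comp_left, Ep, Over.homMk_left] at h
  have hc : ((adj p).counit.app (Over.mk (prod.fst : E ⨯ B' ⟶ E))).left = (genCounit p B').left :=
    rfl
  have h2 : (wB p s).left ≫ prod.snd ≫ p' = ((Over.pullback p).map (aA p A)).left ≫ evBase p B' :=
    calc (wB p s).left ≫ prod.snd ≫ p' = ((wB p s).left ≫ prod.map (𝟙 E) p') ≫ prod.snd := by simp
      _ = ((Over.pullback p).map (aA p A) ≫
          (adj p).counit.app (Over.mk (prod.fst : E ⨯ B' ⟶ E))).left ≫ prod.snd := h =≫ _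
      _ = ((Over.pullback p).map (aA p A)).left ≫ evBase p B' := Category.assoc _ _ _
  calc uB p s ≫ p' = (kap p A).hom ≫ ((wB p s).left ≫ prod.snd ≫ p') := by
        exact (Category.assoc _ _ _).trans (congrArg ((kap p A).hom ≫ ·) (Category.assoc _ _ _))
    _ = (kap p A).hom ≫ ((Over.pullback p).map (aA p A)).left ≫ evBase p B' :=
        congrArg ((kap p A).hom ≫ ·) h2
    _ = (kap p A).hom ≫ ((kap p A).inv ≫ pullback.snd A.hom (fstP p B')) ≫ evBase p B' :=
        congrArg (fun t => (kap p A).hom ≫ t ≫ evBase p B') (kapinv_snd p A).symm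
    _ = pullback.snd A.hom (fstP p B') ≫ evBase p B' := by simp

def bwd (s : A ⟶ Yo p p') : A ⟶ G.obj (Xo p p') :=
  adjG.homEquiv _ _ (Over.homMk
    (pullback.lift (uB p s) (pullback.snd A.hom (fstP p B')) (uB_comp p s)) (by exact pullback.lift_snd _ _ _))

lemma bwd_fwd (g : A ⟶ G.obj (Xo p p')) : bwd p G adjG (fwd p G adjG g) = g := by
  have h1 : vB p (fwd p G adjG g) = vMap p G adjG g := by
    ext; simp [vB, fwd]; rfl
  have h2 : wB p (fwd p G adjG g) = wMap p G adjG g := by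
    rw [wB, h1, vMap, Equiv.symm_apply_apply]
  have h3 : uB p (fwd p G adjG g) = toE p G adjG g := by
    rw [uB, h2]
    simp [wMap]
    exact (congrArg ((kap p A).hom ≫ ·) (prod.lift_snd _ _)).trans (Iso.hom_inv_id_assoc _ _)
  rw [bwd]
  have h4 : (Over.homMk
      (pullback.lift (uB p (fwd p G adjG g)) (pullback.snd A.hom (fstP p B'))
        (uB_comp p (fwd p G adjG g))) (by exact pullback.lift_snd _ _ _) :
        (Over.pullback (fstP p B')).obj A ⟶ Xo p p') = (adjG.homEquiv _ _).symm g := by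
    ext
    apply pullback.hom_ext
    · simp [h3, toE, Xo]
      exact pullback.lift_fst _ _ _
    · have := Over.w ((adjG.homEquiv A (Xo p p')).symm g)
      simp only [Xo, Over.mk_hom, Over.pullback_obj_hom] at this
      simp [Xo, this]
      exact pullback.lift_snd _ _ _
  rw [h4, Equiv.apply_symm_apply]

lemma fwd_bwd (s : A ⟶ Yo p p') : fwd p G adjG (bwd p G adjG s) = s := by
  have h0 : (adjG.homEquiv _ _).symm (bwd p G adjG s) = Over.homMk
      (pullback.lift (uB p s) (pullback.snd A.hom (fstP p B')) (uB_comp p s))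
      (by exact pullback.lift_snd _ _ _) := by
    rw [bwd, Equiv.symm_apply_apply]
  have h1 : toE p G adjG (bwd p G adjG s) = uB p s := by
    rw [toE, h0]; exact pullback.lift_fst _ _ _
  have h2 : wMap p G adjG (bwd p G adjG s) = wB p s := by
    ext
    apply Limits.prod.hom_ext
    · have := Over.w (wB p s)
      simp only [Over.mk_hom, Over.pullback_obj_hom, Ahat] at this
      simp [wMap, Ahat, this]
      exact prod.lift_fst _ _
    · simp [wMap, h1, uB]
      exact (prod.lift_snd _ _).trans (Iso.inv_hom_id_assoc _ _)
  have h3 : vMap p G adjG (bwd p G adjG s) = vB p s := by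
    rw [vMap, h2, wB, Equiv.apply_symm_apply]
  ext
  simp [fwd, h3, vB]
  rfl

variable {A' : Over ((genQ p B').left)}

def fhat (f : A' ⟶ A) : Ahat p A' ⟶ Ahat p A :=
  Over.homMk f.left (by
    show f.left ≫ A.hom ≫ (genQ p B').hom = A'.hom ≫ (genQ p B').hom
    rw [← Category.assoc, Over.w f])

lemma toE_natural (f : A' ⟶ A) (g : A ⟶ G.obj (Xo p p')) :
    toE p G adjG (f ≫ g) = ((Over.pullback (fstP p B')).map f).left ≫ toE p G adjG g := by
  rw [toE, toE, Adjunction.homEquiv_naturality_left_symm]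
  simp
  exact Category.assoc _ _ _

lemma kap_natural (f : A' ⟶ A) :
    (kap p A').inv ≫ ((Over.pullback (fstP p B')).map f).left =
      ((Over.pullback p).map (fhat p f)).left ≫ (kap p A).inv := by
  change (kap p A').inv ≫ (pullback.lift (pullback.fst A'.hom (fstP p B') ≫ f.left)
      (pullback.snd A'.hom (fstP p B')) (by simp [pullback.condition]) :
      pullback A'.hom (fstP p B') ⟶ pullback A.hom (fstP p B')) =
    (pullback.lift (pullback.fst (A'.hom ≫ (genQ p B').hom) p ≫ f.left)
      (pullback.snd (A'.hom ≫ (genQ p B').hom) p) (by simp [pullback.condition]) :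
      pullback (A'.hom ≫ (genQ p B').hom) p ⟶ pullback (A.hom ≫ (genQ p B').hom) p) ≫ (kap p A).inv
  apply pullback.hom_ext
  · simp [kap, fhat, Ahat]
    erw [pullback.lift_fst, pullback.lift_fst]
    simp
  · apply pullback.hom_ext
    · simp [kap, fhat, Ahat, Over.w f]
      erw [pullback.lift_snd_assoc, pullback.lift_fst_assoc]
      simp
    · simp [kap, fhat, Ahat]
      erw [pullback.lift_snd_assoc, pullback.lift_snd]
      simp

lemma wMap_natural (f : A' ⟶ A) (g : A ⟶ G.obj (Xo p p')) :
    wMap p G adjG (f ≫ g) = (Over.pullback p).map (fhat p f) ≫ wMap p G adjG g := by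
  ext
  change prod.lift (pullback.snd (A'.hom ≫ (genQ p B').hom) p) ((kap p A').inv ≫ toE p G adjG (f ≫ g)) =
    (pullback.lift (pullback.fst (A'.hom ≫ (genQ p B').hom) p ≫ f.left)
      (pullback.snd (A'.hom ≫ (genQ p B').hom) p) (by simp [pullback.condition]) :
      pullback (A'.hom ≫ (genQ p B').hom) p ⟶ pullback (A.hom ≫ (genQ p B').hom) p) ≫
      prod.lift (pullback.snd (A.hom ≫ (genQ p B').hom) p) ((kap p A).inv ≫ toE p G adjG g)
  apply Limits.prod.hom_ext
  · simp [wMap, fhat, Ahat]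
    erw [prod.lift_fst, prod.lift_fst]
    exact (pullback.lift_snd _ _ _).symm
  · simp only [wMap, Over.comp_left, Over.homMk_left, prod.lift_snd, Category.assoc]
    rw [toE_natural, ← Category.assoc]
    exact ((kap_natural p f) =≫ _).trans (Category.assoc _ _ _)

lemma fwd_natural (f : A' ⟶ A) (g : A ⟶ G.obj (Xo p p')) :
    fwd p G adjG (f ≫ g) = f ≫ fwd p G adjG g := by
  have h : vMap p G adjG (f ≫ g) = fhat p f ≫ vMap p G adjG g := by
    rw [vMap, wMap_natural, Adjunction.homEquiv_naturality_left, vMap]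
  ext
  simp [fwd, h, fhat]
  rfl

end PGCAux

/-- distributivity / Beck–Chevalley for pushforwards: pushing forward the
first leg `ev^*(E × E') ⟶ p^*p_*(E × B')` of the generic composite `GenComp(p', p)`
along its second leg `p^*p_*(E × B') ⟶ p_*(E × B')` yields (up to isomorphism over
`p_*(E × B')`) the same morphism `p_*(E × E') ⟶ p_*(E × B')` as applying the polynomial
functor `P_p` of `p` to the map `p' : E' ⟶ B'`. -/
theorem pushforward_generic_composite_is_polynomial
    {E B E' B' : C} (p : E ⟶ B) [(Over.pullback p).IsLeftAdjoint] (p' : E' ⟶ B')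
    (G : Over (pullback (genQ p B').hom p) ⥤ Over ((genQ p B').left))
    (adjG : Over.pullback (pullback.fst (genQ p B').hom p) ⊣ G) :
    Nonempty
      (G.obj (Over.mk (pullback.snd p' (evBase p B'))) ≅
        Over.mk
          (((Over.pullback p).rightAdjoint.map
            (Over.homMk (prod.map (𝟙 E) p') (by simp) :
              (Over.mk (prod.fst : E ⨯ E' ⟶ E)) ⟶ Over.mk (prod.fst : E ⨯ B' ⟶ E))).left)) := by
  exact ⟨Yoneda.ext (G.obj (PGCAux.Xo p p')) (PGCAux.Yo p p')
    (fun {Z} g => PGCAux.fwd p G adjG g)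
    (fun {Z} s => PGCAux.bwd p G adjG s)
    (fun {Z} g => PGCAux.bwd_fwd p G adjG g)
    (fun {Z} s => PGCAux.fwd_bwd p G adjG s)
    (fun {Z Z'} f g => PGCAux.fwd_natural p G adjG f g)⟩

end
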